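/- Let G be a simple graph with edge ideal I = I(G) ⊆ S, let m ≥ 1 be an integer, let e₁, e₂, …, e_m be edges of G (repetitions allowed) and let v ∈ S be a monomial such that e₁e₂⋯e_m·v ∈ I^{m+1} (each edge identified with its degree-2 monomial). Then there exist variables w and y with wy dividing v, an integer t ≥ 0, and a walk in G of odd length w = z₁ − z₂ − z₃ − ⋯ − z_{2t} − z_{2t+1} − z_{2t+2} = y such that the multiset {{z₂z₃, z₄z₅, …, z_{2t}z_{2t+1}}} is contained in the multiset {{e₁,…,e_m}}. (For t = 0 the walk is the single edge wy.) -/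
import Mathlib


open MvPolynomial

/-- The monomial `X i * X j` attached to an edge of a graph. -/
noncomputable def edgeMon {n : ℕ} (K : Type*) [Field K] :
    Sym2 (Fin n) → MvPolynomial (Fin n) K :=
  Sym2.lift ⟨fun i j => X i * X j, fun _ _ => mul_comm _ _⟩

namespace BanerjeeAux


noncomputable def edgeVec {n : ℕ} : Sym2 (Fin n) → (Fin n →₀ ℕ) :=
  Sym2.lift ⟨fun i j => Finsupp.single i 1 + Finsupp.single j 1, fun _ _ => add_comm _ _⟩

@[simp] lemma edgeVec_mk {n : ℕ} (i j : Fin n) :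
    edgeVec s(i, j) = Finsupp.single i 1 + Finsupp.single j 1 := rfl

lemma degSum_apply {n : ℕ} (S : Multiset (Sym2 (Fin n))) (x : Fin n) :
    (S.map edgeVec).sum x = ((S.map fun e => edgeVec e x)).sum := by
  induction S using Multiset.induction with
  | empty => simp
  | cons a s ih => simp [Finsupp.add_apply, ih]

lemma degSum_total {n : ℕ} (S : Multiset (Sym2 (Fin n))) :
    ∑ x : Fin n, (S.map edgeVec).sum x = 2 * Multiset.card S := by
  induction S using Multiset.induction with
  | empty => simp
  | cons a s ih =>
    induction a using Sym2.ind with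
    | _ i j =>
      simp only [Multiset.map_cons, Multiset.sum_cons, Finsupp.add_apply,
        Finset.sum_add_distrib, ih, Multiset.card_cons, edgeVec_mk,
        Finsupp.single_apply]
      simp [Finset.sum_ite_eq, Nat.mul_add]
      omega

lemma mem_of_degSum_pos {n : ℕ} {S : Multiset (Sym2 (Fin n))} {x : Fin n}
    (h : 0 < (S.map edgeVec).sum x) : ∃ f ∈ S, x ∈ f := by
  by_contra hc
  push_neg at hc
  rw [degSum_apply] at h
  have hz : ((S.map fun e => edgeVec e x)).sum = 0 := by
    apply Multiset.sum_eq_zero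
    intro c hcmem
    obtain ⟨f, hf, rfl⟩ := Multiset.mem_map.mp hcmem
    induction f using Sym2.ind with
    | _ i j =>
      have hx := hc _ hf
      simp only [Sym2.mem_iff] at hx
      push_neg at hx
      have hxi : ¬ i = x := fun h => hx.1 h.symm
      have hxj : ¬ j = x := fun h => hx.2 h.symm
      simp [Finsupp.add_apply, Finsupp.single_apply, hxi, hxj]
  omega

lemma degSum_pos_of_mem {n : ℕ} {S : Multiset (Sym2 (Fin n))} {f : Sym2 (Fin n)}
    (hf : f ∈ S) {x : Fin n} (hx : x ∈ f) : 0 < (S.map edgeVec).sum x := by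
  rw [degSum_apply]
  have h1 : edgeVec f x ∈ S.map fun e => edgeVec e x := Multiset.mem_map_of_mem _ hf
  have h2 : 0 < edgeVec f x := by
    induction f using Sym2.ind with
    | _ i j =>
      rw [Sym2.mem_iff] at hx
      rcases hx with rfl | rfl <;>
        simp [Finsupp.add_apply, Finsupp.single_apply]
  calc 0 < edgeVec f x := h2
    _ ≤ _ := Multiset.single_le_sum (fun y _ => Nat.zero_le y) _ h1

lemma range_succ_map {α : Type*} (f : ℕ → α) (t : ℕ) :
    (Multiset.range (t + 1)).map f = f 0 ::ₘ (Multiset.range t).map (fun i => f (i + 1)) := by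
  induction t with
  | zero => simp [Multiset.range_succ]
  | succ t ih =>
    rw [Multiset.range_succ, Multiset.map_cons, ih, Multiset.range_succ, Multiset.map_cons,
      Multiset.cons_swap]

lemma key {n : ℕ} (G : SimpleGraph (Fin n)) (B : Multiset (Sym2 (Fin n))) :
    ∀ (R : Multiset (Sym2 (Fin n))), (∀ f ∈ R, f ∈ G.edgeSet) → (∀ f ∈ B, f ∈ G.edgeSet) →
    Multiset.card R = Multiset.card B + 1 → ∀ v : Fin n →₀ ℕ,
    (R.map edgeVec).sum ≤ (B.map edgeVec).sum + v →
    ∃ (w y : Fin n) (t : ℕ) (z : ℕ → Fin n), z 0 = w ∧ z (2 * t + 1) = y ∧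
      (∀ i < 2 * t + 1, G.Adj (z i) (z (i + 1))) ∧
      (Multiset.range t).map (fun i => s(z (2 * i + 1), z (2 * i + 2))) ≤ B ∧
      Finsupp.single w 1 + Finsupp.single y 1 ≤ v := by
  induction B using Multiset.strongInductionOn with
  | _ B IH =>
  intro R hR hB hcard v hle
  -- find a vertex u with excess red degree, hence v u ≥ 1
  have hex : ∃ u, (B.map edgeVec).sum u < (R.map edgeVec).sum u := by
    by_contra hc
    push_neg at hc
    have h1 : ∑ x : Fin n, (R.map edgeVec).sum x ≤ ∑ x : Fin n, (B.map edgeVec).sum x :=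
      Finset.sum_le_sum fun x _ => hc x
    rw [degSum_total, degSum_total, hcard] at h1
    omega
  obtain ⟨u, hu⟩ := hex
  have hvu : 1 ≤ v u := by
    have h := Finsupp.le_def.mp hle u
    simp only [Finsupp.add_apply] at h
    omega
  obtain ⟨f1, hf1R, huf1⟩ := mem_of_degSum_pos (Nat.lt_of_le_of_lt (Nat.zero_le _) hu)
  obtain ⟨u1, rfl⟩ := Sym2.mem_iff_exists.mp huf1
  have hadj1 : G.Adj u u1 := (SimpleGraph.mem_edgeSet G).mp (hR _ hf1R)
  have hne1 : u ≠ u1 := hadj1.ne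
  by_cases hdone : Finsupp.single u 1 + Finsupp.single u1 1 ≤ v
  · refine ⟨u, u1, 0, (fun k => if k = 0 then u else u1), rfl, rfl, ?_, by simp, hdone⟩
    intro i hi
    interval_cases i
    simpa using hadj1
  · -- v u1 = 0
    have hvu1 : v u1 = 0 := by
      by_contra h
      apply hdone
      rw [Finsupp.le_def]
      intro x
      simp only [Finsupp.add_apply, Finsupp.single_apply]
      by_cases hux : u = x
      · subst hux
        have : ¬ u1 = u := fun hh => hne1 hh.symm
        simp [this, hvu]
      · by_cases hu1x : u1 = x
        · subst hu1x
          simp [hux]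
          omega
        · simp [hux, hu1x]
    -- there is a blue edge at u1
    have hBu1 : 0 < (B.map edgeVec).sum u1 := by
      have hRu1 : 0 < (R.map edgeVec).sum u1 := degSum_pos_of_mem hf1R (by simp)
      have h := Finsupp.le_def.mp hle u1
      simp only [Finsupp.add_apply, hvu1] at h
      omega
    obtain ⟨eb, hebB, hu1eb⟩ := mem_of_degSum_pos hBu1
    obtain ⟨u2, rfl⟩ := Sym2.mem_iff_exists.mp hu1eb
    have hadj2 : G.Adj u1 u2 := (SimpleGraph.mem_edgeSet G).mp (hB _ hebB)
    set R' := R.erase s(u, u1) with hR'def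
    set B' := B.erase s(u1, u2) with hB'def
    set v' := (v - Finsupp.single u 1) + Finsupp.single u2 1 with hv'def
    have hRsplit : R = s(u, u1) ::ₘ R' := (Multiset.cons_erase hf1R).symm
    have hBsplit : B = s(u1, u2) ::ₘ B' := (Multiset.cons_erase hebB).symm
    have hle2 : ((s(u, u1) ::ₘ R').map edgeVec).sum ≤ ((s(u1, u2) ::ₘ B').map edgeVec).sum + v := by
      rw [← hRsplit, ← hBsplit]; exact hle
    have hle' : (R'.map edgeVec).sum ≤ (B'.map edgeVec).sum + v' := by
      rw [Finsupp.le_def]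
      intro x
      have hx := Finsupp.le_def.mp hle2 x
      simp only [Multiset.map_cons, Multiset.sum_cons, Finsupp.add_apply, edgeVec_mk,
        Finsupp.tsub_apply, Finsupp.single_apply, hv'def] at hx ⊢
      by_cases hux : u = x
      · subst hux
        split_ifs at hx ⊢ <;> omega
      · split_ifs at hx ⊢ <;> omega
    have hcard' : Multiset.card R' = Multiset.card B' + 1 := by
      have h1 := Multiset.card_erase_of_mem hf1R
      have h2 := Multiset.card_erase_of_mem hebB
      have h3 : 0 < Multiset.card B := Multiset.card_pos_iff_exists_mem.mpr ⟨_, hebB⟩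
      rw [hR'def, hB'def, h1, h2, Nat.pred_eq_sub_one, Nat.pred_eq_sub_one]
      omega
    obtain ⟨w', y', t', z', hz0, hzend, hadj', hblue', hpair'⟩ :=
      IH B' (Multiset.erase_lt.mpr hebB) R'
        (fun f hf => hR f (Multiset.mem_of_mem_erase hf))
        (fun f hf => hB f (Multiset.mem_of_mem_erase hf)) hcard' v' hle'
    by_cases hgood : Finsupp.single w' 1 + Finsupp.single y' 1 ≤ v
    · exact ⟨w', y', t', z', hz0, hzend, hadj',
        le_trans hblue' (Multiset.erase_le _ _), hgood⟩
    · have hcases : w' = u2 ∨ y' = u2 := by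
        by_contra hc
        push_neg at hc
        apply hgood
        rw [Finsupp.le_def]
        intro x
        have hx := Finsupp.le_def.mp hpair' x
        simp only [Finsupp.add_apply, Finsupp.tsub_apply, Finsupp.single_apply, hv'def] at hx ⊢
        have hw2 : u2 = x → ¬ w' = x := fun h1 h2 => hc.1 (h2.trans h1.symm)
        have hy2 : u2 = x → ¬ y' = x := fun h1 h2 => hc.2 (h2.trans h1.symm)
        by_cases hu2x : u2 = x
        · simp only [if_pos hu2x, if_neg (hw2 hu2x), if_neg (hy2 hu2x)]
          omega
        · simp only [if_neg hu2x] at hx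
          omega
      -- helper for endpoint bound
      have hend : ∀ a : Fin n, Finsupp.single u2 1 + Finsupp.single a 1 ≤ v' →
          Finsupp.single u 1 + Finsupp.single a 1 ≤ v := by
        intro a ha
        rw [Finsupp.le_def]
        intro x
        have hx := Finsupp.le_def.mp ha x
        simp only [Finsupp.add_apply, Finsupp.tsub_apply, Finsupp.single_apply, hv'def] at hx ⊢
        by_cases hux : u = x
        · subst hux
          split_ifs at hx ⊢ <;> omega
        · split_ifs at hx ⊢ <;> omega
      rcases hcases with hwu2 | hyu2
      · -- prepend: u - u1 - (w' = u2) - ... - y'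
        rw [hwu2] at hz0 hpair' 
        refine ⟨u, y', t' + 1,
          (fun k => if k = 0 then u else if k = 1 then u1 else z' (k - 2)), rfl, ?_, ?_, ?_, ?_⟩
        · have h1 : ¬ (2 * (t' + 1) + 1 = 0) := by omega
          have h2 : ¬ (2 * (t' + 1) + 1 = 1) := by omega
          simp only [if_neg h1, if_neg h2]
          have h3 : 2 * (t' + 1) + 1 - 2 = 2 * t' + 1 := by omega
          rw [h3, hzend]
        · intro i hi
          match i, hi with
          | 0, _ => simpa using hadj1
          | 1, _ =>
            simp only [if_neg (by omega : ¬ (1 : ℕ) = 0), if_pos rfl,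
              if_neg (by omega : ¬ (2 : ℕ) = 0), if_neg (by omega : ¬ (2 : ℕ) = 1)]
            have : z' (2 - 2) = u2 := hz0
            rw [this]
            exact hadj2
          | (k + 2), hk =>
            have h1 : ¬ (k + 2 = 0) := by omega
            have h2 : ¬ (k + 2 = 1) := by omega
            have h3 : ¬ (k + 3 = 0) := by omega
            have h4 : ¬ (k + 3 = 1) := by omega
            simp only [if_neg h1, if_neg h2, if_neg h3, if_neg h4]
            have h5 : k + 2 - 2 = k := by omega
            have h6 : k + 3 - 2 = k + 1 := by omega
            rw [h5, h6]
            exact hadj' k (by omega)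
        · rw [range_succ_map]
          have hhead : s((if (2 * 0 + 1 : ℕ) = 0 then u else if (2 * 0 + 1 : ℕ) = 1 then u1
              else z' (2 * 0 + 1 - 2)),
              (if (2 * 0 + 2 : ℕ) = 0 then u else if (2 * 0 + 2 : ℕ) = 1 then u1
              else z' (2 * 0 + 2 - 2))) = s(u1, u2) := by
            norm_num
            rw [show z' 0 = u2 from hz0]
            exact Or.inl rfl
          have htail : (Multiset.range t').map
              (fun i => s((if (2 * (i + 1) + 1 : ℕ) = 0 then u
                else if (2 * (i + 1) + 1 : ℕ) = 1 then u1 else z' (2 * (i + 1) + 1 - 2)),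
                (if (2 * (i + 1) + 2 : ℕ) = 0 then u
                else if (2 * (i + 1) + 2 : ℕ) = 1 then u1 else z' (2 * (i + 1) + 2 - 2)))) =
              (Multiset.range t').map (fun i => s(z' (2 * i + 1), z' (2 * i + 2))) := by
            apply Multiset.map_congr rfl
            intro i _
            have h1 : ¬ (2 * (i + 1) + 1 = 0) := by omega
            have h2 : ¬ (2 * (i + 1) + 1 = 1) := by omega
            have h3 : ¬ (2 * (i + 1) + 2 = 0) := by omega
            have h4 : ¬ (2 * (i + 1) + 2 = 1) := by omega
            simp only [if_neg h1, if_neg h2, if_neg h3, if_neg h4]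
            have h5 : 2 * (i + 1) + 1 - 2 = 2 * i + 1 := by omega
            have h6 : 2 * (i + 1) + 2 - 2 = 2 * i + 2 := by omega
            rw [h5, h6]
          rw [hhead, htail, hBsplit]
          exact Multiset.cons_le_cons _ hblue'
        · exact hend y' hpair'
      · -- append: w' - ... - (y' = u2) - u1 - u
        rw [hyu2] at hzend hpair' 
        refine ⟨w', u, t' + 1,
          (fun k => if k ≤ 2 * t' + 1 then z' k else if k = 2 * t' + 2 then u1 else u),
          ?_, ?_, ?_, ?_, ?_⟩
        · simp only [if_pos (by omega : (0:ℕ) ≤ 2 * t' + 1)]; exact hz0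
        · have h1 : ¬ (2 * (t' + 1) + 1 ≤ 2 * t' + 1) := by omega
          have h2 : ¬ (2 * (t' + 1) + 1 = 2 * t' + 2) := by omega
          simp only [if_neg h1, if_neg h2]
        · intro i hi
          by_cases hi1 : i < 2 * t' + 1
          · simp only [if_pos (by omega : i ≤ 2 * t' + 1),
              if_pos (by omega : i + 1 ≤ 2 * t' + 1)]
            exact hadj' i hi1
          · have : i = 2 * t' + 1 ∨ i = 2 * t' + 2 := by omega
            rcases this with rfl | rfl
            · simp only [if_pos (le_refl (2 * t' + 1)),
                if_neg (by omega : ¬ (2 * t' + 1 + 1 ≤ 2 * t' + 1)),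
                if_pos (by omega : 2 * t' + 1 + 1 = 2 * t' + 2)]
              rw [hzend]
              exact hadj2.symm
            · simp only [if_neg (by omega : ¬ (2 * t' + 2 ≤ 2 * t' + 1)),
                if_pos rfl,
                if_neg (by omega : ¬ (2 * t' + 2 + 1 ≤ 2 * t' + 1)),
                if_neg (by omega : ¬ (2 * t' + 2 + 1 = 2 * t' + 2))]
              exact hadj1.symm
        · rw [Multiset.range_succ, Multiset.map_cons]
          have hhead : s((if 2 * t' + 1 ≤ 2 * t' + 1 then z' (2 * t' + 1)
              else if 2 * t' + 1 = 2 * t' + 2 then u1 else u),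
              (if 2 * t' + 2 ≤ 2 * t' + 1 then z' (2 * t' + 2)
              else if 2 * t' + 2 = 2 * t' + 2 then u1 else u)) = s(u1, u2) := by
            simp only [if_pos (le_refl (2 * t' + 1)),
              if_neg (by omega : ¬ (2 * t' + 2 ≤ 2 * t' + 1)), if_pos rfl]
            rw [hzend]
            exact Sym2.eq_swap
          have htail : (Multiset.range t').map
              (fun i => s((if 2 * i + 1 ≤ 2 * t' + 1 then z' (2 * i + 1)
                else if 2 * i + 1 = 2 * t' + 2 then u1 else u),
                (if 2 * i + 2 ≤ 2 * t' + 1 then z' (2 * i + 2)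
                else if 2 * i + 2 = 2 * t' + 2 then u1 else u))) =
              (Multiset.range t').map (fun i => s(z' (2 * i + 1), z' (2 * i + 2))) := by
            apply Multiset.map_congr rfl
            intro i hi
            rw [Multiset.mem_range] at hi
            simp only [if_pos (by omega : 2 * i + 1 ≤ 2 * t' + 1),
              if_pos (by omega : 2 * i + 2 ≤ 2 * t' + 1)]
          rw [show (2 * t' + 1) = 2 * t' + 1 from rfl] at hhead
          rw [hhead, htail, hBsplit]
          exact Multiset.cons_le_cons _ hblue'
        · -- single w' 1 + single u 1 ≤ v
          have h := hend w' (by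
            rw [add_comm] at hpair'
            exact hpair')
          rw [add_comm] at h
          exact h

lemma X_mul_X_eq {K : Type*} [Field K] {n : ℕ} (i j : Fin n) :
    (X i * X j : MvPolynomial (Fin n) K) =
      monomial (Finsupp.single i 1 + Finsupp.single j 1) 1 := by
  rw [X, X, monomial_mul, one_mul]

lemma edgeMon_eq {n : ℕ} (K : Type*) [Field K] (f : Sym2 (Fin n)) :
    edgeMon K f = monomial (edgeVec f) (1 : K) := by
  induction f using Sym2.ind with
  | _ i j =>
    show (X i * X j : MvPolynomial (Fin n) K) = _
    rw [edgeVec_mk, X_mul_X_eq]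

lemma prod_monomial {K : Type*} [Field K] {n : ℕ} {ι : Type*} (s : Finset ι)
    (d : ι → (Fin n →₀ ℕ)) :
    (∏ i ∈ s, (monomial (d i) (1 : K) : MvPolynomial (Fin n) K)) =
      monomial (∑ i ∈ s, d i) 1 := by
  induction s using Finset.cons_induction with
  | empty => simp
  | cons a s ha ih => rw [Finset.prod_cons, Finset.sum_cons, ih, monomial_mul, one_mul]

lemma power_le {K : Type*} [Field K] {n : ℕ} (G : SimpleGraph (Fin n)) (k : ℕ) :
    (Ideal.span {f | ∃ i j, G.Adj i j ∧ f = (X i * X j : MvPolynomial (Fin n) K)}) ^ k ≤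
      Ideal.span ((fun d => monomial d (1 : K)) ''
        {d | ∃ F : Multiset (Sym2 (Fin n)), (∀ f ∈ F, f ∈ G.edgeSet) ∧ Multiset.card F = k ∧
          d = (F.map edgeVec).sum}) := by
  induction k with
  | zero =>
    have h1 : (1 : MvPolynomial (Fin n) K) ∈ Ideal.span ((fun d => monomial d (1 : K)) ''
        {d | ∃ F : Multiset (Sym2 (Fin n)), (∀ f ∈ F, f ∈ G.edgeSet) ∧ Multiset.card F = 0 ∧
          d = (F.map edgeVec).sum}) := by
      apply Ideal.subset_span
      exact ⟨0, ⟨0, by simp, by simp, by simp⟩, by simp⟩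
    rw [pow_zero, Ideal.one_eq_top, (Ideal.eq_top_iff_one _).mpr h1]
  | succ k ih =>
    rw [pow_succ]
    refine le_trans (Ideal.mul_mono ih le_rfl) ?_
    rw [Ideal.span_mul_span', Ideal.span_le]
    rintro x hx
    rw [Set.mem_mul] at hx
    obtain ⟨a, ha, b, hb, hab⟩ := hx
    obtain ⟨d, ⟨F, hF, hFc, rfl⟩, rfl⟩ := ha
    obtain ⟨i, j, hij, rfl⟩ := hb
    apply Ideal.subset_span
    refine ⟨(F.map edgeVec).sum + (Finsupp.single i 1 + Finsupp.single j 1),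
      ⟨s(i, j) ::ₘ F, ?_, ?_, ?_⟩, ?_⟩
    · intro f hf
      rcases Multiset.mem_cons.mp hf with rfl | hf
      · exact (SimpleGraph.mem_edgeSet G).mpr hij
      · exact hF f hf
    · simp [hFc]
    · simp [Multiset.sum_cons, add_comm]
    · rw [← hab, X_mul_X_eq, monomial_mul, one_mul]


end BanerjeeAux

/-- Banerjee's lemma: if `e₁⋯e_m · v ∈ I(G)^{m+1}` for edges `e₁,…,e_m` of `G`
and a monomial `v`, then there are variables `w, y` with `wy ∣ v` and a walk of odd length
`w = z₁ - z₂ - ⋯ - z_{2t+2} = y` in `G` whose edges `z₂z₃, z₄z₅, …, z_{2t}z_{2t+1}`, as a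
multiset, are contained in the multiset `{{e₁,…,e_m}}`. -/

theorem banerjee_lemma
    {K : Type*} [Field K] {n : ℕ} (G : SimpleGraph (Fin n))
    (I : Ideal (MvPolynomial (Fin n) K))
    (hI : I = Ideal.span {f | ∃ i j, G.Adj i j ∧ f = X i * X j})
    (m : ℕ) (hm : 1 ≤ m) (e : Fin m → Sym2 (Fin n)) (he : ∀ i, e i ∈ G.edgeSet)
    (dv : Fin n →₀ ℕ)
    (hmem : (∏ i, edgeMon K (e i)) * monomial dv (1 : K) ∈ I ^ (m + 1)) :
    ∃ w y : Fin n, (X w * X y : MvPolynomial (Fin n) K) ∣ monomial dv (1 : K) ∧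
      ∃ (t : ℕ) (z : ℕ → Fin n), z 0 = w ∧ z (2 * t + 1) = y ∧
        (∀ i < 2 * t + 1, G.Adj (z i) (z (i + 1))) ∧
        (Multiset.range t).map (fun i => s(z (2 * i + 1), z (2 * i + 2))) ≤
          Finset.univ.val.map e := by
  classical
  have hprod : (∏ i, edgeMon K (e i)) * monomial dv (1 : K) =
      monomial ((∑ i, BanerjeeAux.edgeVec (e i)) + dv) 1 := by
    rw [show (∏ i, edgeMon K (e i)) = ∏ i, monomial (BanerjeeAux.edgeVec (e i)) (1 : K) from
      Finset.prod_congr rfl (fun i _ => BanerjeeAux.edgeMon_eq K (e i)),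
      BanerjeeAux.prod_monomial, monomial_mul, one_mul]
  rw [hI] at hmem
  have hmem2 := BanerjeeAux.power_le (K := K) G (m + 1) hmem
  rw [hprod, MvPolynomial.mem_ideal_span_monomial_image] at hmem2
  have hDmem : ((∑ i, BanerjeeAux.edgeVec (e i)) + dv) ∈
      (monomial ((∑ i, BanerjeeAux.edgeVec (e i)) + dv) (1 : K)).support := by
    rw [support_monomial]
    simp
  obtain ⟨d, ⟨F, hF, hFc, rfl⟩, hdle⟩ := hmem2 _ hDmem
  have hsum : (∑ i, BanerjeeAux.edgeVec (e i)) =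
      ((Finset.univ.val.map e).map BanerjeeAux.edgeVec).sum := by
    rw [Multiset.map_map]
    rfl
  have hcard : Multiset.card F = Multiset.card (Finset.univ.val.map e) + 1 := by
    simp [hFc]
  have hBedges : ∀ f ∈ Finset.univ.val.map e, f ∈ G.edgeSet := by
    intro f hf
    obtain ⟨i, _, rfl⟩ := Multiset.mem_map.mp hf
    exact he i
  have hle : (F.map BanerjeeAux.edgeVec).sum ≤
      ((Finset.univ.val.map e).map BanerjeeAux.edgeVec).sum + dv := by
    rw [← hsum]
    exact hdle
  obtain ⟨w, y, t, z, hz0, hzend, hadj, hblue, hpair⟩ :=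
    BanerjeeAux.key G (Finset.univ.val.map e) F hF hBedges hcard dv hle
  refine ⟨w, y, ?_, t, z, hz0, hzend, hadj, hblue⟩
  rw [BanerjeeAux.X_mul_X_eq]
  exact monomial_dvd_monomial.mpr ⟨Or.inr hpair, one_dvd _⟩
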